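/- Let g₁, g₂ ∈ G be such that g₁, g₂, and the product g₁g₂ are each bounded elements, and suppose l(g₁) > 1. Let h ∈ G be such that l(h) = 1 and l(h g₁ h⁻¹) < l(g₁). Then: (i) l(h g₁ h⁻¹) = l(g₁) − 2; (ii) if l(g₂) > 1, then l(h g₂ h⁻¹) = l(g₂) − 2; (iii) if l(g₂) ≤ 1, then l(h g₂ h⁻¹) ≤ 1. -/

import Mathlib

variable {G : Type*} [Group G]

/-- A reduced expression with respect to the factors `A` and `B`: every letter lies in
`(A ∪ B) \ (A ∩ B)` and consecutive letters lie in different factors. -/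
def IsReducedWord (A B : Subgroup G) (w : List G) : Prop :=
  (∀ x ∈ w, (x ∈ A ∨ x ∈ B) ∧ ¬(x ∈ A ∧ x ∈ B)) ∧
    w.Chain' fun x y => ¬(x ∈ A ∧ y ∈ A) ∧ ¬(x ∈ B ∧ y ∈ B)

/-- `G` is the internal amalgamated free product of its subgroups `A` and `B` over `A ⊓ B`:
`A` and `B` generate `G` and no reduced word of length at least `2` represents the identity
(this is the classical characterization of the canonical map from the abstract amalgamated
free product onto `G` being an isomorphism). -/
def IsAmalgamatedProduct (A B : Subgroup G) : Prop :=
  A ⊔ B = ⊤ ∧ ∀ w : List G, IsReducedWord A B w → 2 ≤ w.length → w.prod ≠ 1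

/-- The length `l(g)` of an element: the (common) number of letters of a reduced expression
of `g`; it is `0` for elements of `A ⊓ B` (which admit no reduced expression). -/
noncomputable def amalgLen (A B : Subgroup G) (g : G) : ℕ :=
  sInf {r | ∃ w : List G, IsReducedWord A B w ∧ w.prod = g ∧ w.length = r}

/-- A subgroup `H` is bounded if the lengths of its elements are bounded. -/
def BoundedSubgroup (A B : Subgroup G) (H : Subgroup G) : Prop :=
  ∃ N : ℕ, ∀ h ∈ H, amalgLen A B h ≤ N

/-- An element is bounded if the cyclic subgroup it generates is bounded. -/
def BoundedElement (A B : Subgroup G) (g : G) : Prop :=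
  BoundedSubgroup A B (Subgroup.zpowers g)


namespace AmalgAux

variable (A B : Subgroup G)

def Letter (x : G) : Prop := (x ∈ A ∨ x ∈ B) ∧ ¬(x ∈ A ∧ x ∈ B)

def Alt (x y : G) : Prop := ¬(x ∈ A ∧ y ∈ A) ∧ ¬(x ∈ B ∧ y ∈ B)

variable {A B}

lemma red_iff {w : List G} :
    IsReducedWord A B w ↔ (∀ x ∈ w, Letter A B x) ∧ w.Chain' (Alt A B) := Iff.rfl

lemma alt_congr {x x' y y' : G} (h1 : x ∈ A ↔ x' ∈ A) (h2 : x ∈ B ↔ x' ∈ B)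
    (h3 : y ∈ A ↔ y' ∈ A) (h4 : y ∈ B ↔ y' ∈ B) : Alt A B x y ↔ Alt A B x' y' := by
  unfold Alt; rw [h1, h2, h3, h4]

lemma letter_congr {x x' : G} (h1 : x ∈ A ↔ x' ∈ A) (h2 : x ∈ B ↔ x' ∈ B) :
    Letter A B x ↔ Letter A B x' := by
  unfold Letter; rw [h1, h2]

lemma alt_symm {x y : G} (h : Alt A B x y) : Alt A B y x :=
  ⟨fun c => h.1 ⟨c.2, c.1⟩, fun c => h.2 ⟨c.2, c.1⟩⟩

lemma notAlt_cases {x y : G} (h : ¬ Alt A B x y) : (x ∈ A ∧ y ∈ A) ∨ (x ∈ B ∧ y ∈ B) := by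
  unfold Alt at h; tauto

lemma memK_mul_right {x c : G} (hc : c ∈ A ⊓ B) : (x * c ∈ A ↔ x ∈ A) ∧ (x * c ∈ B ↔ x ∈ B) :=
  ⟨mul_mem_cancel_right (Subgroup.mem_inf.1 hc).1, mul_mem_cancel_right (Subgroup.mem_inf.1 hc).2⟩

lemma memK_mul_left {x c : G} (hc : c ∈ A ⊓ B) : (c * x ∈ A ↔ x ∈ A) ∧ (c * x ∈ B ↔ x ∈ B) :=
  ⟨mul_mem_cancel_left (Subgroup.mem_inf.1 hc).1, mul_mem_cancel_left (Subgroup.mem_inf.1 hc).2⟩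

lemma mulK_iff {u v : G} (h : u * v ∈ A ⊓ B) : (u ∈ A ↔ v ∈ A) ∧ (u ∈ B ↔ v ∈ B) := by
  obtain ⟨hA, hB⟩ := Subgroup.mem_inf.1 h
  constructor
  · constructor
    · intro hu; have := mul_mem (inv_mem hu) hA; simpa using this
    · intro hv; have := mul_mem hA (inv_mem hv); simpa using this
  · constructor
    · intro hu; have := mul_mem (inv_mem hu) hB; simpa using this
    · intro hv; have := mul_mem hB (inv_mem hv); simpa using this

lemma same_factor_letter {x y : G} (hx : Letter A B x) (hy : Letter A B y)
    (hs : ¬ Alt A B x y) (hK : x * y ∉ A ⊓ B) :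
    Letter A B (x * y) ∧ (x * y ∈ A ↔ x ∈ A) ∧ (x * y ∈ B ↔ x ∈ B) ∧
      (x * y ∈ A ↔ y ∈ A) ∧ (x * y ∈ B ↔ y ∈ B) := by
  rcases notAlt_cases hs with ⟨hxA, hyA⟩ | ⟨hxB, hyB⟩
  · have hm : x * y ∈ A := mul_mem hxA hyA
    have hmB : x * y ∉ B := fun hb => hK (Subgroup.mem_inf.2 ⟨hm, hb⟩)
    have hxB : x ∉ B := fun hb => hx.2 ⟨hxA, hb⟩
    have hyB : y ∉ B := fun hb => hy.2 ⟨hyA, hb⟩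
    exact ⟨⟨Or.inl hm, fun hc => hmB hc.2⟩, iff_of_true hm hxA, iff_of_false hmB hxB,
      iff_of_true hm hyA, iff_of_false hmB hyB⟩
  · have hm : x * y ∈ B := mul_mem hxB hyB
    have hmA : x * y ∉ A := fun ha => hK (Subgroup.mem_inf.2 ⟨ha, hm⟩)
    have hxA : x ∉ A := fun ha => hx.2 ⟨ha, hxB⟩
    have hyA : y ∉ A := fun ha => hy.2 ⟨ha, hyB⟩
    exact ⟨⟨Or.inr hm, fun hc => hmA hc.1⟩, iff_of_false hmA hxA, iff_of_true hm hxB,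
      iff_of_false hmA hyA, iff_of_true hm hyB⟩

lemma letters_same {x y : G} (hx : Letter A B x) (hy : Letter A B y) (h : ¬ Alt A B x y) :
    (x ∈ A ↔ y ∈ A) ∧ (x ∈ B ↔ y ∈ B) := by
  rcases notAlt_cases h with ⟨h1, h2⟩ | ⟨h1, h2⟩
  · exact ⟨iff_of_true h1 h2, iff_of_false (fun hb => hx.2 ⟨h1, hb⟩) (fun hb => hy.2 ⟨h2, hb⟩)⟩
  · exact ⟨iff_of_false (fun ha => hx.2 ⟨ha, h1⟩) (fun ha => hy.2 ⟨ha, h2⟩), iff_of_true h1 h2⟩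

lemma red_nil : IsReducedWord A B ([] : List G) := ⟨by simp, List.isChain_nil⟩

lemma red_singleton {x : G} (hx : Letter A B x) : IsReducedWord A B [x] :=
  ⟨fun z hz => by simp at hz; subst hz; exact hx, List.isChain_singleton x⟩

lemma fold_right {w : List G} {c : G} (hw : IsReducedWord A B w) (hne : w ≠ [])
    (hc : c ∈ A ⊓ B) :
    ∃ v, IsReducedWord A B v ∧ v.prod = w.prod * c ∧ v.length = w.length ∧ v ≠ [] := by
  obtain ⟨u, t, rfl⟩ : ∃ u t, w = u ++ [t] := by
    rcases List.eq_nil_or_concat w with h | ⟨u, t, h⟩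
    · exact absurd h hne
    · exact ⟨u, t, by simpa [List.concat_eq_append] using h⟩
  obtain ⟨hL, hC⟩ := hw
  have htc := memK_mul_right (x := t) hc
  refine ⟨u ++ [t * c], ⟨?_, ?_⟩, ?_, by simp, by simp⟩
  · intro z hz
    rcases List.mem_append.1 hz with h | h
    · exact hL z (by simp [h])
    · have : z = t * c := by simpa using h
      subst this
      exact (letter_congr htc.1.symm htc.2.symm).1 (hL t (by simp))
  · rw [List.Chain', List.isChain_append] at hC ⊢
    refine ⟨hC.1, List.isChain_singleton _, ?_⟩
    intro a ha b hb
    have : t * c = b := by simpa using hb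
    subst this
    exact (alt_congr Iff.rfl Iff.rfl htc.1.symm htc.2.symm).1 (hC.2.2 a ha t (by simp))
  · simp [List.prod_append, mul_assoc]

lemma fold_left {w : List G} {c : G} (hw : IsReducedWord A B w) (hne : w ≠ [])
    (hc : c ∈ A ⊓ B) :
    ∃ v, IsReducedWord A B v ∧ v.prod = c * w.prod ∧ v.length = w.length ∧ v ≠ [] := by
  obtain ⟨t, u, rfl⟩ : ∃ t u, w = t :: u := by
    cases w with
    | nil => exact absurd rfl hne
    | cons a l => exact ⟨a, l, rfl⟩
  obtain ⟨hL, hC⟩ := hw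
  have htc := memK_mul_left (x := t) hc
  refine ⟨(c * t) :: u, ⟨?_, ?_⟩, ?_, by simp, by simp⟩
  · intro z hz
    rcases List.mem_cons.1 hz with rfl | h
    · exact (letter_congr htc.1.symm htc.2.symm).1 (hL t (by simp))
    · exact hL z (by simp [h])
  · rw [List.Chain', List.isChain_cons] at hC ⊢
    exact ⟨fun b hb => (alt_congr htc.1.symm htc.2.symm Iff.rfl Iff.rfl).1 (hC.1 b hb), hC.2⟩
  · simp [List.prod_cons, mul_assoc]

lemma eq_nil_of_prod_one (hG2 : ∀ w : List G, IsReducedWord A B w → 2 ≤ w.length → w.prod ≠ 1)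
    {w : List G} (hw : IsReducedWord A B w) (hp : w.prod = 1) : w = [] := by
  cases w with
  | nil => rfl
  | cons a t =>
    cases t with
    | nil =>
      exfalso
      have ha : a = 1 := by simpa using hp
      subst ha
      exact (hw.1 1 (by simp)).2 ⟨one_mem A, one_mem B⟩
    | cons b t2 => exact absurd hp (hG2 _ hw (by simp))

lemma eq_nil_of_prod_memK (hG2 : ∀ w : List G, IsReducedWord A B w → 2 ≤ w.length → w.prod ≠ 1)
    {w : List G} (hw : IsReducedWord A B w) (hp : w.prod ∈ A ⊓ B) : w = [] := by
  by_contra hne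
  obtain ⟨v, hv, hvp, hvl, hvne⟩ := fold_right hw hne (inv_mem hp)
  exact hvne (eq_nil_of_prod_one hG2 hv (by rw [hvp]; group))

lemma red_inv {w : List G} (hw : IsReducedWord A B w) :
    IsReducedWord A B (w.reverse.map (fun z => z⁻¹)) ∧
      (w.reverse.map (fun z => z⁻¹)).prod = w.prod⁻¹ := by
  refine ⟨⟨?_, ?_⟩, ?_⟩
  · intro z hz
    simp only [List.mem_map, List.mem_reverse] at hz
    obtain ⟨a, ha, rfl⟩ := hz
    exact (letter_congr (inv_mem_iff (H := A)).symm (inv_mem_iff (H := B)).symm).1 (hw.1 a ha)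
  · rw [List.Chain', List.isChain_map, List.isChain_reverse]
    refine hw.2.imp ?_
    intro a b hab
    exact (alt_congr (inv_mem_iff (H := A)).symm (inv_mem_iff (H := B)).symm
      (inv_mem_iff (H := A)).symm (inv_mem_iff (H := B)).symm).1 (alt_symm hab)
  · rw [List.map_reverse, ← List.prod_inv_reverse]


lemma length_unique (hG2 : ∀ w : List G, IsReducedWord A B w → 2 ≤ w.length → w.prod ≠ 1) :
    ∀ (n : ℕ) (w w' : List G), w.length + w'.length ≤ n → IsReducedWord A B w →
      IsReducedWord A B w' → w.prod = w'.prod → w.length = w'.length := by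
  intro n
  induction n with
  | zero =>
    intro w w' hl _ _ _
    omega
  | succ n ih =>
    intro w w' hlen hw hw' hp
    rcases List.eq_nil_or_concat w with rfl | ⟨u, x, hwx⟩
    · have : w' = [] := eq_nil_of_prod_one hG2 hw' (by simpa using hp.symm)
      simp [this]
    rcases List.eq_nil_or_concat w' with rfl | ⟨u', y, hwy⟩
    · have : w = [] := eq_nil_of_prod_one hG2 hw (by simpa using hp)
      simp [this]
    rw [List.concat_eq_append] at hwx hwy
    subst hwx hwy
    have hLx : Letter A B x := hw.1 x (by simp)
    have hLy : Letter A B y := hw'.1 y (by simp)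
    have hu : IsReducedWord A B u := ⟨fun z hz => hw.1 z (by simp [hz]), (List.isChain_append.1 hw.2).1⟩
    have hu' : IsReducedWord A B u' := ⟨fun z hz => hw'.1 z (by simp [hz]), (List.isChain_append.1 hw'.2).1⟩
    have hjun : ∀ a ∈ u.getLast?, Alt A B a x :=
      fun a ha => (List.isChain_append.1 hw.2).2.2 a ha x (by simp)
    have hp' : u.prod * x = u'.prod * y := by simpa [List.prod_append] using hp
    have hnalt : ¬ Alt A B x y := by
      intro halt
      have hred2 := red_inv hw'
      have hWred : IsReducedWord A B ((u ++ [x]) ++ ((u' ++ [y]).reverse.map (fun z => z⁻¹))) := by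
        refine ⟨?_, ?_⟩
        · intro z hz
          rcases List.mem_append.1 hz with h | h
          · exact hw.1 z h
          · exact hred2.1.1 z h
        · rw [List.Chain', List.isChain_append]
          refine ⟨hw.2, hred2.1.2, ?_⟩
          intro a ha b hb
          have ha' : x = a := by simpa using ha
          subst ha'
          have hb' : y⁻¹ = b := by
            have : (u' ++ [y]).reverse = y :: u'.reverse := by simp
            rw [this] at hb
            simpa using hb
          subst hb'
          exact (alt_congr Iff.rfl Iff.rfl (inv_mem_iff (H := A)).symm
            (inv_mem_iff (H := B)).symm).1 halt
      have hWprod : ((u ++ [x]) ++ ((u' ++ [y]).reverse.map (fun z => z⁻¹))).prod = 1 := by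
        rw [List.prod_append, hred2.2, hp]
        group
      exact hG2 _ hWred (by simp; omega) hWprod
    by_cases hK : x * y⁻¹ ∈ A ⊓ B
    · by_cases huE : u = []
      · subst huE
        have hx : x = u'.prod * y := by simpa using hp
        have : u'.prod = x * y⁻¹ := by rw [hx]; group
        have : u' = [] := eq_nil_of_prod_memK hG2 hu' (this ▸ hK)
        simp [this]
      · obtain ⟨v, hv, hvp, hvl, _⟩ := fold_right hu huE hK
        have hvp' : v.prod = u'.prod := by
          rw [hvp, ← mul_assoc, hp']; group
        have := ih v u' (by simp [hvl] at *; omega) hv hu' hvp'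
        simp only [List.length_append, List.length_cons, List.length_nil]
        omega
    · have hKyx : y * x⁻¹ ∉ A ⊓ B := fun hc => hK (by
        have : x * y⁻¹ = (y * x⁻¹)⁻¹ := by group
        rw [this]; exact inv_mem hc)
      have hnaltxy : ¬ Alt A B x y⁻¹ := fun hc => hnalt
        ((alt_congr Iff.rfl Iff.rfl (inv_mem_iff (H := A)) (inv_mem_iff (H := B))).1 hc)
      have hnaltyx : ¬ Alt A B y x⁻¹ := fun hc => (hnalt ∘ alt_symm)
        ((alt_congr Iff.rfl Iff.rfl (inv_mem_iff (H := A)) (inv_mem_iff (H := B))).1 hc)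
      have hLxi : Letter A B x⁻¹ :=
        (letter_congr (inv_mem_iff (H := A)).symm (inv_mem_iff (H := B)).symm).1 hLx
      have hLyi : Letter A B y⁻¹ :=
        (letter_congr (inv_mem_iff (H := A)).symm (inv_mem_iff (H := B)).symm).1 hLy
      obtain ⟨hL1, e1A, e1B, -, -⟩ := same_factor_letter hLx hLyi hnaltxy hK
      obtain ⟨hL2, e2A, e2B, -, -⟩ := same_factor_letter hLy hLxi hnaltyx hKyx
      have hjun' : ∀ a ∈ u'.getLast?, Alt A B a y :=
        fun a ha => (List.isChain_append.1 hw'.2).2.2 a ha y (by simp)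
      have hW1 : IsReducedWord A B (u ++ [x * y⁻¹]) := by
        refine ⟨?_, ?_⟩
        · intro z hz
          rcases List.mem_append.1 hz with h | h
          · exact hu.1 z h
          · have : z = x * y⁻¹ := by simpa using h
            subst this; exact hL1
        · rw [List.Chain', List.isChain_append]
          refine ⟨hu.2, List.isChain_singleton _, ?_⟩
          intro a ha b hb
          have : x * y⁻¹ = b := by simpa using hb
          subst this
          exact (alt_congr Iff.rfl Iff.rfl e1A.symm e1B.symm).1 (hjun a ha)
      have hW2 : IsReducedWord A B (u' ++ [y * x⁻¹]) := by
        refine ⟨?_, ?_⟩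
        · intro z hz
          rcases List.mem_append.1 hz with h | h
          · exact hu'.1 z h
          · have : z = y * x⁻¹ := by simpa using h
            subst this; exact hL2
        · rw [List.Chain', List.isChain_append]
          refine ⟨hu'.2, List.isChain_singleton _, ?_⟩
          intro a ha b hb
          have : y * x⁻¹ = b := by simpa using hb
          subst this
          exact (alt_congr Iff.rfl Iff.rfl e2A.symm e2B.symm).1 (hjun' a ha)
      have hW1p : (u ++ [x * y⁻¹]).prod = u'.prod := by
        rw [List.prod_append, List.prod_singleton, ← mul_assoc, hp']; group
      have hW2p : (u' ++ [y * x⁻¹]).prod = u.prod := by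
        rw [List.prod_append, List.prod_singleton, ← mul_assoc, ← hp']; group
      have e1 := ih (u ++ [x * y⁻¹]) u' (by simp at *; omega) hW1 hu' hW1p
      have e2 := ih (u' ++ [y * x⁻¹]) u (by simp at *; omega) hW2 hu hW2p
      simp only [List.length_append, List.length_cons, List.length_nil] at e1 e2 ⊢
      omega

lemma amalgLen_eq (hG2 : ∀ w : List G, IsReducedWord A B w → 2 ≤ w.length → w.prod ≠ 1)
    {w : List G} {g : G} (hw : IsReducedWord A B w) (hp : w.prod = g) :
    amalgLen A B g = w.length := by
  apply le_antisymm
  · exact Nat.sInf_le ⟨w, hw, hp, rfl⟩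
  · apply le_csInf
    · exact ⟨w.length, ⟨w, hw, hp, rfl⟩⟩
    rintro r ⟨w', hw', hp', rfl⟩
    exact (length_unique hG2 (w.length + w'.length) w w' le_rfl hw hw' (by rw [hp, hp'])).le

lemma amalgLen_K (hG2 : ∀ w : List G, IsReducedWord A B w → 2 ≤ w.length → w.prod ≠ 1)
    {g : G} (hg : g ∈ A ⊓ B) : amalgLen A B g = 0 := by
  by_cases h1 : g = 1
  · subst h1
    exact amalgLen_eq hG2 red_nil (by simp)
  · have : {r | ∃ w : List G, IsReducedWord A B w ∧ w.prod = g ∧ w.length = r} = ∅ := by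
      rw [Set.eq_empty_iff_forall_notMem]
      rintro r ⟨w, hw, hp, rfl⟩
      have := eq_nil_of_prod_memK hG2 hw (hp ▸ hg)
      subst this
      exact h1 (by simpa using hp.symm)
    unfold amalgLen
    rw [this, Nat.sInf_empty]


def HasRed (A B : Subgroup G) (g : G) : Prop :=
  g ∈ A ⊓ B ∨ ∃ w, IsReducedWord A B w ∧ w.prod = g

lemma hasRed_letter {x : G} (hx : Letter A B x) : HasRed A B x :=
  Or.inr ⟨[x], red_singleton hx, by simp⟩

lemma hasRed_mul_letter {g x : G} (hg : HasRed A B g) (hx : Letter A B x) :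
    HasRed A B (g * x) := by
  rcases hg with hK | ⟨w, hw, rfl⟩
  · have iffs := memK_mul_left (x := x) hK
    exact hasRed_letter ((letter_congr iffs.1.symm iffs.2.symm).1 hx)
  · rcases List.eq_nil_or_concat w with rfl | ⟨u, t, hut⟩
    · simpa using hasRed_letter hx
    rw [List.concat_eq_append] at hut
    subst hut
    have hLt : Letter A B t := hw.1 t (by simp)
    have hu : IsReducedWord A B u :=
      ⟨fun z hz => hw.1 z (by simp [hz]), (List.isChain_append.1 hw.2).1⟩
    have hjun : ∀ a ∈ u.getLast?, Alt A B a t :=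
      fun a ha => (List.isChain_append.1 hw.2).2.2 a ha t (by simp)
    by_cases halt : Alt A B t x
    · refine Or.inr ⟨(u ++ [t]) ++ [x], ⟨?_, ?_⟩, by simp [List.prod_append, mul_assoc]⟩
      · intro z hz
        rcases List.mem_append.1 hz with h | h
        · exact hw.1 z h
        · have : z = x := by simpa using h
          subst this; exact hx
      · rw [List.Chain', List.isChain_append]
        refine ⟨hw.2, List.isChain_singleton _, ?_⟩
        intro a ha b hb
        have ha' : t = a := by simpa using ha
        have hb' : x = b := by simpa using hb
        subst ha' hb'
        exact halt
    · by_cases hK : t * x ∈ A ⊓ B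
      · by_cases huE : u = []
        · subst huE
          have : ([] ++ [t] : List G).prod * x = t * x := by simp
          rw [this]
          exact Or.inl hK
        · obtain ⟨v, hv, hvp, _, _⟩ := fold_right hu huE hK
          exact Or.inr ⟨v, hv, by rw [hvp]; simp [List.prod_append, mul_assoc]⟩
      · obtain ⟨hLtx, h1, h2, -, -⟩ := same_factor_letter hLt hx halt hK
        refine Or.inr ⟨u ++ [t * x], ⟨?_, ?_⟩, by simp [List.prod_append, mul_assoc]⟩
        · intro z hz
          rcases List.mem_append.1 hz with h | h
          · exact hu.1 z h
          · have : z = t * x := by simpa using h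
            subst this; exact hLtx
        · rw [List.Chain', List.isChain_append]
          refine ⟨hu.2, List.isChain_singleton _, ?_⟩
          intro a ha b hb
          have hb' : t * x = b := by simpa using hb
          subst hb'
          exact (alt_congr Iff.rfl Iff.rfl h1.symm h2.symm).1 (hjun a ha)

lemma hasRed_mul_word :
    ∀ (w : List G), IsReducedWord A B w → ∀ g, HasRed A B g → HasRed A B (g * w.prod) := by
  intro w
  induction w with
  | nil => intro _ g hg; simpa using hg
  | cons t u ih =>
    intro hw g hg
    have ht : Letter A B t := hw.1 t (by simp)
    have hu : IsReducedWord A B u :=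
      ⟨fun z hz => hw.1 z (by simp [hz]), (List.isChain_cons.1 hw.2).2⟩
    have := ih hu (g * t) (hasRed_mul_letter hg ht)
    simpa [mul_assoc] using this

lemma hasRed_inv {g : G} (hg : HasRed A B g) : HasRed A B g⁻¹ := by
  rcases hg with hK | ⟨w, hw, rfl⟩
  · exact Or.inl (inv_mem hK)
  · exact Or.inr ⟨w.reverse.map (fun z => z⁻¹), (red_inv hw).1, (red_inv hw).2⟩

lemma exists_hasRed (hG : IsAmalgamatedProduct A B) (g : G) : HasRed A B g := by
  have hg : g ∈ Subgroup.closure ((A : Set G) ∪ B) := by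
    rw [Subgroup.closure_union, Subgroup.closure_eq, Subgroup.closure_eq, hG.1]
    trivial
  refine Subgroup.closure_induction (p := fun g _ => HasRed A B g) ?_ ?_ ?_ ?_ hg
  · intro z hz
    by_cases hK : z ∈ A ⊓ B
    · exact Or.inl hK
    · refine hasRed_letter ⟨?_, fun hc => hK (Subgroup.mem_inf.2 hc)⟩
      rcases hz with h | h
      · exact Or.inl h
      · exact Or.inr h
  · exact Or.inl (one_mem _)
  · intro a b _ _ ha hb
    rcases hb with hK | ⟨w, hw, rfl⟩
    · rcases ha with hKa | ⟨w, hw, rfl⟩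
      · exact Or.inl (mul_mem hKa hK)
      · by_cases hwE : w = []
        · subst hwE
          simp only [List.prod_nil, one_mul]; exact Or.inl hK
        · obtain ⟨v, hv, hvp, _, _⟩ := fold_right hw hwE hK
          exact Or.inr ⟨v, hv, hvp⟩
    · exact hasRed_mul_word w hw a ha
  · intro a _ ha
    exact hasRed_inv ha

lemma join_red {w : List G} (hw : IsReducedWord A B w) (hne : w ≠ [])
    (hcyc : ∀ a ∈ w.getLast?, ∀ b ∈ w.head?, Alt A B a b) (n : ℕ) :
    IsReducedWord A B (List.replicate n w).flatten ∧
      (List.replicate n w).flatten.prod = w.prod ^ n ∧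
      (List.replicate n w).flatten.length = n * w.length ∧
      ((List.replicate n w).flatten = [] ∨
        ((List.replicate n w).flatten.head? = w.head? ∧
          (List.replicate n w).flatten.getLast? = w.getLast?)) := by
  induction n with
  | zero => exact ⟨red_nil, by simp, by simp, Or.inl rfl⟩
  | succ n ih =>
    obtain ⟨ihr, ihp, ihl, ihe⟩ := ih
    have hJ : (List.replicate (n + 1) w).flatten = w ++ (List.replicate n w).flatten := by
      rw [List.replicate_succ, List.flatten_cons]
    refine ⟨⟨?_, ?_⟩, ?_, ?_, ?_⟩
    · intro z hz
      rw [hJ] at hz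
      rcases List.mem_append.1 hz with h | h
      · exact hw.1 z h
      · exact ihr.1 z h
    · rw [hJ, List.Chain', List.isChain_append]
      refine ⟨hw.2, ihr.2, ?_⟩
      intro a ha b hb
      rcases ihe with he | ⟨hh, -⟩
      · rw [he] at hb; simp at hb
      · rw [hh] at hb
        exact hcyc a ha b hb
    · rw [hJ, List.prod_append, ihp, pow_succ']
    · rw [hJ, List.length_append, ihl]; ring
    · right
      rcases ihe with he | ⟨hh, hl⟩
      · rw [hJ, he]; simp
      · constructor
        · rw [hJ, List.head?_append, hh]
          cases w with
          | nil => exact absurd rfl hne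
          | cons a l => simp
        · rw [hJ, List.getLast?_append, hl, Option.or_self]

lemma unbounded_of_cyc (hG2 : ∀ w : List G, IsReducedWord A B w → 2 ≤ w.length → w.prod ≠ 1)
    {w : List G} (hw : IsReducedWord A B w) (hne : w ≠ [])
    (hcyc : ∀ a ∈ w.getLast?, ∀ b ∈ w.head?, Alt A B a b) :
    ¬ BoundedElement A B w.prod := by
  rintro ⟨N, hN⟩
  obtain ⟨hr, hp, hl, -⟩ := join_red hw hne hcyc (N + 1)
  have := hN _ (Subgroup.npow_mem_zpowers w.prod (N + 1))
  rw [amalgLen_eq hG2 hr hp, hl] at this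
  have hw1 : 1 ≤ w.length := by
    cases w with
    | nil => exact absurd rfl hne
    | cons a l => simp
  have : N + 1 ≤ (N + 1) * w.length := Nat.le_mul_of_pos_right _ hw1
  omega

lemma aux_pow (x p y : G) : ∀ n : ℕ, (x * (p * y)) ^ (n + 1) = x * ((p * (y * x)) ^ n * (p * y))
  | 0 => by simp
  | n + 1 => by rw [pow_succ, aux_pow x p y n, pow_succ]; group


lemma prod_cons_append (x y : G) (m J : List G) :
    (x :: (J ++ (m ++ [y]))).prod = x * (J.prod * (m.prod * y)) := by
  simp [List.prod_cons, List.prod_append]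

lemma prod_cons_append' (x y : G) (m : List G) :
    (x :: m ++ [y]).prod = x * (m.prod * y) := by
  simp [List.prod_cons, List.prod_append]

lemma red_split {x y : G} {m : List G} (hw : IsReducedWord A B (x :: m ++ [y])) :
    Letter A B x ∧ Letter A B y ∧ IsReducedWord A B (x :: m) ∧ IsReducedWord A B m ∧
      (∀ a ∈ (x :: m).getLast?, Alt A B a y) ∧ (∀ b ∈ (m ++ [y]).head?, Alt A B x b) := by
  have hap := List.isChain_append.1 (show List.Chain' (Alt A B) ((x :: m) ++ [y]) from hw.2)
  refine ⟨hw.1 x (by simp), hw.1 y (by simp),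
    ⟨fun z hz => hw.1 z (List.mem_append_left _ hz), hap.1⟩,
    ⟨fun z hz => hw.1 z (List.mem_append_left _ (List.mem_cons_of_mem _ hz)), ?_⟩,
    fun a ha => hap.2.2 a ha y (by simp), (List.isChain_cons.1 hw.2).1⟩
  cases m with
  | nil => exact List.isChain_nil
  | cons a l => exact (List.isChain_cons.1 hap.1).2

lemma red_append {w w' : List G} (hw : IsReducedWord A B w) (hw' : IsReducedWord A B w')
    (hj : ∀ a ∈ w.getLast?, ∀ b ∈ w'.head?, Alt A B a b) : IsReducedWord A B (w ++ w') := by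
  refine ⟨?_, List.isChain_append.2 ⟨hw.2, hw'.2, hj⟩⟩
  intro z hz
  rcases List.mem_append.1 hz with h | h
  · exact hw.1 z h
  · exact hw'.1 z h

lemma red_congr_ends {x x' y y' : G} {m : List G} (hw : IsReducedWord A B (x :: m ++ [y]))
    (hx' : Letter A B x') (hy' : Letter A B y')
    (h1 : x ∈ A ↔ x' ∈ A) (h2 : x ∈ B ↔ x' ∈ B) (h3 : y ∈ A ↔ y' ∈ A) (h4 : y ∈ B ↔ y' ∈ B) :
    IsReducedWord A B (x' :: m ++ [y']) := by
  obtain ⟨hL, hC⟩ := hw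
  rw [List.Chain', List.isChain_append, List.isChain_cons] at hC
  obtain ⟨⟨hhd, hcm⟩, -, hjn⟩ := hC
  refine ⟨?_, ?_⟩
  · intro q hq
    rcases List.mem_append.1 hq with h | h
    · rcases List.mem_cons.1 h with rfl | h'
      · exact hx'
      · exact hL q (List.mem_append_left _ (List.mem_cons_of_mem _ h'))
    · have : q = y' := by simpa using h
      subst this; exact hy'
  · rw [List.Chain', List.isChain_append, List.isChain_cons]
    refine ⟨⟨fun b hb => (alt_congr h1 h2 Iff.rfl Iff.rfl).1 (hhd b hb), hcm⟩,
      List.isChain_singleton _, ?_⟩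
    intro a ha b hb
    have hb' : y' = b := by simpa using hb
    subst hb'
    cases m with
    | nil =>
      have ha' : x' = a := by simpa using ha
      subst ha'
      exact (alt_congr h1 h2 h3 h4).1 (hjn x (by simp) y (by simp))
    | cons z t =>
      rw [List.getLast?_cons_cons] at ha
      exact (alt_congr Iff.rfl Iff.rfl h3 h4).1
        (hjn a (by rw [List.getLast?_cons_cons]; exact ha) y (by simp))

lemma bounded_struct (hG2 : ∀ w : List G, IsReducedWord A B w → 2 ≤ w.length → w.prod ≠ 1)
    {x y : G} {m : List G} (hw : IsReducedWord A B (x :: m ++ [y]))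
    (hb : BoundedElement A B ((x :: m ++ [y]).prod)) :
    m ≠ [] ∧ y * x ∈ A ⊓ B := by
  have hlast : (x :: m ++ [y]).getLast? = some y := List.getLast?_concat (l := x :: m)
  have hhead : (x :: m ++ [y]).head? = some x := rfl
  have hnAlt : ¬ Alt A B y x := by
    intro halt
    refine unbounded_of_cyc hG2 hw (by simp) ?_ hb
    intro a ha b hb'
    rw [hlast] at ha; rw [hhead] at hb'
    have ha' : y = a := by simpa using ha
    have hb'' : x = b := by simpa using hb'
    subst ha' hb''
    exact halt
  have hLx : Letter A B x := hw.1 x (by simp)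
  have hLy : Letter A B y := hw.1 y (by simp)
  have hm : m ≠ [] := by
    rintro rfl
    have h2 : Alt A B x y := by
      have := hw.2
      rw [show (x :: ([] : List G) ++ [y]) = [x, y] from rfl] at this
      exact (List.isChain_cons.1 this).1 y (by simp)
    exact hnAlt (alt_symm h2)
  refine ⟨hm, ?_⟩
  by_contra hyx
  obtain ⟨z, m', rfl⟩ : ∃ z m', m = z :: m' := by
    cases m with
    | nil => exact absurd rfl hm
    | cons a l => exact ⟨a, l, rfl⟩
  obtain ⟨hLyx, j1, j2, j3, j4⟩ := same_factor_letter hLy hLx hnAlt hyx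
  have hc1 := List.isChain_cons.1 hw.2
  have hAxz : Alt A B x z := hc1.1 z (by simp)
  have hc2 := List.isChain_append.1 hc1.2
  have hmid : List.Chain' (Alt A B) (z :: m') := hc2.1
  have hjun : ∀ a ∈ (z :: m').getLast?, Alt A B a y := fun a ha => hc2.2.2 a ha y (by simp)
  have hv : IsReducedWord A B ((z :: m') ++ [y * x]) := by
    refine ⟨?_, ?_⟩
    · intro q hq
      rcases List.mem_append.1 hq with h | h
      · exact hw.1 q (List.mem_append_left _ (List.mem_cons_of_mem _ h))
      · have : q = y * x := by simpa using h
        subst this; exact hLyx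
    · rw [List.Chain', List.isChain_append]
      refine ⟨hmid, List.isChain_singleton _, ?_⟩
      intro a ha b hb
      have : y * x = b := by simpa using hb
      subst this
      exact (alt_congr Iff.rfl Iff.rfl j1.symm j2.symm).1 (hjun a ha)
  have hvne : ((z :: m') ++ [y * x] : List G) ≠ [] := by simp
  have hvcyc : ∀ a ∈ ((z :: m') ++ [y * x]).getLast?, ∀ b ∈ ((z :: m') ++ [y * x]).head?,
      Alt A B a b := by
    intro a ha b hb
    rw [List.getLast?_concat] at ha
    have ha' : y * x = a := by simpa using ha
    have hb' : z = b := by simpa using hb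
    subst ha' hb'
    exact (alt_congr j3.symm j4.symm Iff.rfl Iff.rfl).1 hAxz
  obtain ⟨N, hN⟩ := hb
  obtain ⟨Jr, Jp, Jl, Je⟩ := join_red hv hvne hvcyc N
  have hvprod : ((z :: m') ++ [y * x]).prod = (z :: m').prod * (y * x) := by
    simp [List.prod_append, mul_assoc]
  have hvlen : ((z :: m') ++ [y * x]).length = m'.length + 2 := by simp
  set J := (List.replicate N ((z :: m') ++ [y * x])).flatten with hJ_def
  rcases Je with he | ⟨hh, hl⟩
  · -- J = [] forces N = 0
    have hN0 : N = 0 := by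
      rw [he] at Jl
      simp [hvlen] at Jl
      omega
    subst hN0
    have hmem := hN _ (Subgroup.npow_mem_zpowers ((x :: (z :: m') ++ [y]).prod) 1)
    rw [pow_one, amalgLen_eq hG2 hw rfl] at hmem
    simp at hmem
  · -- main case
    have hW : IsReducedWord A B (x :: (J ++ ((z :: m') ++ [y]))) := by
      refine ⟨?_, ?_⟩
      · intro q hq
        rcases List.mem_cons.1 hq with rfl | hq'
        · exact hLx
        rcases List.mem_append.1 hq' with h | h
        · exact Jr.1 q h
        · rcases List.mem_append.1 h with h' | h'
          · exact hw.1 q (List.mem_append_left _ (List.mem_cons_of_mem _ h'))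
          · exact hw.1 q (List.mem_append_right _ h')
      · rw [List.Chain', List.isChain_cons]
        constructor
        · intro b hb
          rw [List.head?_append, hh] at hb
          have : ((z :: m') ++ [y * x]).head? = some z := rfl
          rw [this] at hb
          have hb' : z = b := by simpa using hb
          subst hb'
          exact hAxz
        · rw [List.isChain_append]
          refine ⟨Jr.2, hc1.2, ?_⟩
          intro a ha b hb
          rw [hl, List.getLast?_concat] at ha
          have ha' : y * x = a := by simpa using ha
          have hb' : z = b := by simpa using hb
          subst ha' hb'
          exact (alt_congr j3.symm j4.symm Iff.rfl Iff.rfl).1 hAxz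
    have hWprod : (x :: (J ++ ((z :: m') ++ [y]))).prod = ((x :: (z :: m') ++ [y]).prod) ^ (N + 1) := by
      rw [prod_cons_append, Jp, hvprod, prod_cons_append']
      exact (aux_pow x ((z :: m').prod) y N).symm
    have hmem := hN _ (Subgroup.npow_mem_zpowers ((x :: (z :: m') ++ [y]).prod) (N + 1))
    rw [← hWprod, amalgLen_eq hG2 hW rfl] at hmem
    have hWlen : (x :: (J ++ ((z :: m') ++ [y]))).length = 1 + (J.length + (m'.length + 2)) := by
      simp; omega
    have hJlen : J.length = N * (m'.length + 2) := by rw [Jl, hvlen]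
    have : N ≤ N * (m'.length + 2) := Nat.le_mul_of_pos_right _ (by omega)
    rw [hWlen, hJlen] at hmem
    omega

lemma conj_word (hG2 : ∀ w : List G, IsReducedWord A B w → 2 ≤ w.length → w.prod ≠ 1)
    {h x y : G} {m : List G} (hw : IsReducedWord A B (x :: m ++ [y])) (hm : m ≠ [])
    (hhx : h * x ∈ A ⊓ B) (hyh : y * h⁻¹ ∈ A ⊓ B) :
    amalgLen A B (h * (x :: m ++ [y]).prod * h⁻¹) = m.length := by
  obtain ⟨-, -, -, hmr, -, -⟩ := red_split hw
  obtain ⟨v1, hv1, hp1, hl1, hne1⟩ := fold_right hmr hm hyh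
  obtain ⟨v2, hv2, hp2, hl2, hne2⟩ := fold_left hv1 hne1 hhx
  have hfin : v2.prod = h * (x :: m ++ [y]).prod * h⁻¹ := by
    rw [hp2, hp1, prod_cons_append']
    group
  rw [amalgLen_eq hG2 hv2 hfin, hl2, hl1]

lemma conj_small (hG2 : ∀ w : List G, IsReducedWord A B w → 2 ≤ w.length → w.prod ≠ 1)
    {h g : G} (hh : Letter A B h)
    (hg : g ∈ A ⊓ B ∨ (Letter A B g ∧ (g ∈ A ↔ h ∈ A) ∧ (g ∈ B ↔ h ∈ B))) :
    amalgLen A B (h * g * h⁻¹) ≤ 1 := by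
  by_cases hK : h * g * h⁻¹ ∈ A ⊓ B
  · simp [amalgLen_K hG2 hK]
  · have hmem : h * g * h⁻¹ ∈ A ∨ h * g * h⁻¹ ∈ B := by
      rcases hh.1 with hA | hB
      · have hgA : g ∈ A := by
          rcases hg with hK' | ⟨_, h1, _⟩
          · exact (Subgroup.mem_inf.1 hK').1
          · exact h1.2 hA
        exact Or.inl (mul_mem (mul_mem hA hgA) (inv_mem hA))
      · have hgB : g ∈ B := by
          rcases hg with hK' | ⟨_, _, h2⟩
          · exact (Subgroup.mem_inf.1 hK').2
          · exact h2.2 hB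
        exact Or.inr (mul_mem (mul_mem hB hgB) (inv_mem hB))
    rw [amalgLen_eq hG2 (red_singleton ⟨hmem, fun hc => hK (Subgroup.mem_inf.2 hc)⟩) (by simp)]
    simp

end AmalgAux


open AmalgAux

theorem stmt2 (A B : Subgroup G) (hG : IsAmalgamatedProduct A B)
    (g₁ g₂ h : G)
    (hb1 : BoundedElement A B g₁) (hb2 : BoundedElement A B g₂)
    (hb12 : BoundedElement A B (g₁ * g₂))
    (hl1 : 1 < amalgLen A B g₁)
    (hh : amalgLen A B h = 1)
    (hred : amalgLen A B (h * g₁ * h⁻¹) < amalgLen A B g₁) :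
    amalgLen A B (h * g₁ * h⁻¹) = amalgLen A B g₁ - 2 ∧
      (1 < amalgLen A B g₂ → amalgLen A B (h * g₂ * h⁻¹) = amalgLen A B g₂ - 2) ∧
      (amalgLen A B g₂ ≤ 1 → amalgLen A B (h * g₂ * h⁻¹) ≤ 1) := by
  -- h is a single letter
  have hhK : h ∉ A ⊓ B := fun hK => by simp [amalgLen_K hG.2 hK] at hh
  obtain ⟨wh, hwh, hph⟩ := (exists_hasRed hG h).resolve_left hhK
  have hwh1 : wh.length = 1 := by
    have := amalgLen_eq hG.2 hwh hph
    rw [hh] at this; omega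
  obtain ⟨h0, rfl⟩ := List.length_eq_one_iff.1 hwh1
  have hh0 : h0 = h := by simpa using hph
  subst hh0
  have hLh : Letter A B h0 := hwh.1 h0 (by simp)
  have hLhi : Letter A B h0⁻¹ :=
    (letter_congr (inv_mem_iff (H := A)).symm (inv_mem_iff (H := B)).symm).1 hLh
  -- decompose g₁
  have hg1K : g₁ ∉ A ⊓ B := fun hK => by simp [amalgLen_K hG.2 hK] at hl1
  obtain ⟨w1, hw1, hp1⟩ := (exists_hasRed hG g₁).resolve_left hg1K
  have hw1len : amalgLen A B g₁ = w1.length := amalgLen_eq hG.2 hw1 hp1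
  obtain ⟨x, t, rfl⟩ : ∃ a t, w1 = a :: t := by
    cases w1 with
    | nil => rw [hw1len] at hl1; simp at hl1
    | cons a t => exact ⟨a, t, rfl⟩
  obtain ⟨m, y, rfl⟩ : ∃ m y, t = m ++ [y] := by
    rcases List.eq_nil_or_concat t with rfl | ⟨m, y, ht⟩
    · rw [hw1len] at hl1; simp at hl1
    · exact ⟨m, y, by simpa [List.concat_eq_append] using ht⟩
  have hw1 : IsReducedWord A B (x :: m ++ [y]) := hw1
  have hp1 : (x :: m ++ [y]).prod = g₁ := hp1
  have hw1len : amalgLen A B g₁ = (x :: m ++ [y]).length := hw1len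
  obtain ⟨hm, hyxK⟩ := bounded_struct hG.2 hw1 (by rw [hp1]; exact hb1)
  obtain ⟨hLx, hLy, hxm, -, hjxm, -⟩ := red_split hw1
  have hyx_iffs := mulK_iff hyxK
  -- h0 * x ∈ A ⊓ B
  have hhxK : h0 * x ∈ A ⊓ B := by
    by_contra hhx
    by_cases halt : Alt A B h0 x
    · -- different factors: conjugation increases length by 2
      have hAyh : Alt A B y h0⁻¹ :=
        (alt_congr hyx_iffs.1.symm hyx_iffs.2.symm (inv_mem_iff (H := A)).symm
          (inv_mem_iff (H := B)).symm).1 (alt_symm halt)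
      have hWred : IsReducedWord A B (h0 :: ((x :: m ++ [y]) ++ [h0⁻¹])) := by
        refine ⟨?_, ?_⟩
        · intro q hq
          rcases List.mem_cons.1 hq with rfl | hq'
          · exact hLh
          rcases List.mem_append.1 hq' with hqq | hqq
          · exact hw1.1 q hqq
          · have : q = h0⁻¹ := by simpa using hqq
            subst this; exact hLhi
        · rw [List.Chain', List.isChain_cons]
          constructor
          · intro b hb
            have hb' : x = b := by simpa using hb
            subst hb'; exact halt
          · rw [List.isChain_append]
            refine ⟨hw1.2, List.isChain_singleton _, ?_⟩
            intro a ha b hb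
            rw [show (x :: m ++ [y]).getLast? = some y from List.getLast?_concat] at ha
            have ha' : y = a := by simpa using ha
            have hb' : h0⁻¹ = b := by simpa using hb
            subst ha' hb'
            exact hAyh
      have hWp : (h0 :: ((x :: m ++ [y]) ++ [h0⁻¹])).prod = h0 * g₁ * h0⁻¹ := by
        rw [List.prod_cons, List.prod_append, hp1]
        simp [mul_assoc]
      have hlenW := amalgLen_eq hG.2 hWred hWp
      rw [hw1len] at hred
      rw [hlenW] at hred
      simp only [List.length_cons, List.length_append, List.length_nil] at hred
      omega
    · -- same factor but h0*x not in the core: conjugation preserves length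
      have hyhK : y * h0⁻¹ ∉ A ⊓ B := fun hK => hhx (by
        have heq : h0 * x = (y * h0⁻¹)⁻¹ * (y * x) := by group
        rw [heq]; exact mul_mem (inv_mem hK) hyxK)
      obtain ⟨hLhx, _, _, hhxA2, hhxB2⟩ := same_factor_letter hLh hLx halt hhx
      have haltyh : ¬ Alt A B y h0⁻¹ := fun hc => halt
        ((alt_congr (inv_mem_iff (H := A)) (inv_mem_iff (H := B)) hyx_iffs.1 hyx_iffs.2).1
          (alt_symm hc))
      obtain ⟨hLyh, k1, k2, -, -⟩ := same_factor_letter hLy hLhi haltyh hyhK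
      have hWred : IsReducedWord A B ((h0 * x) :: m ++ [y * h0⁻¹]) :=
        red_congr_ends hw1 hLhx hLyh hhxA2.symm hhxB2.symm k1.symm k2.symm
      have hWp : ((h0 * x) :: m ++ [y * h0⁻¹]).prod = h0 * g₁ * h0⁻¹ := by
        rw [prod_cons_append', ← hp1, prod_cons_append']
        group
      have hlenW := amalgLen_eq hG.2 hWred hWp
      rw [hw1len] at hred
      rw [hlenW] at hred
      simp only [List.length_cons, List.length_append, List.length_nil] at hred
      omega
  have hyhK : y * h0⁻¹ ∈ A ⊓ B := by
    have heq : y * h0⁻¹ = (y * x) * (h0 * x)⁻¹ := by group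
    rw [heq]; exact mul_mem hyxK (inv_mem hhxK)
  have hhx_iffs := mulK_iff hhxK
  -- part (i)
  have hpart1 : amalgLen A B (h0 * g₁ * h0⁻¹) = amalgLen A B g₁ - 2 := by
    have hc := conj_word hG.2 hw1 hm hhxK hyhK
    rw [hp1] at hc
    rw [hc, hw1len]
    simp only [List.length_cons, List.length_append, List.length_nil]
    omega
  refine ⟨hpart1, ?_, ?_⟩
  · -- part (ii)
    intro hs
    have hg2K : g₂ ∉ A ⊓ B := fun hK => by simp [amalgLen_K hG.2 hK] at hs
    obtain ⟨w2, hw2, hp2⟩ := (exists_hasRed hG g₂).resolve_left hg2K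
    have hw2len : amalgLen A B g₂ = w2.length := amalgLen_eq hG.2 hw2 hp2
    obtain ⟨x₂, t₂, rfl⟩ : ∃ a t, w2 = a :: t := by
      cases w2 with
      | nil => rw [hw2len] at hs; simp at hs
      | cons a t => exact ⟨a, t, rfl⟩
    obtain ⟨m₂, y₂, rfl⟩ : ∃ m2 y2, t₂ = m2 ++ [y2] := by
      rcases List.eq_nil_or_concat t₂ with rfl | ⟨m2, y2, ht⟩
      · rw [hw2len] at hs; simp at hs
      · exact ⟨m2, y2, by simpa [List.concat_eq_append] using ht⟩
    have hw2 : IsReducedWord A B (x₂ :: m₂ ++ [y₂]) := hw2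
    have hp2 : (x₂ :: m₂ ++ [y₂]).prod = g₂ := hp2
    have hw2len : amalgLen A B g₂ = (x₂ :: m₂ ++ [y₂]).length := hw2len
    obtain ⟨hm₂, hyx2K⟩ := bounded_struct hG.2 hw2 (by rw [hp2]; exact hb2)
    obtain ⟨hLx2, hLy2, -, -, -, -⟩ := red_split hw2
    have hyx2_iffs := mulK_iff hyx2K
    have haltyx2 : ¬ Alt A B y x₂ := by
      intro halt
      have hW : IsReducedWord A B ((x :: m ++ [y]) ++ (x₂ :: m₂ ++ [y₂])) := by
        refine red_append hw1 hw2 ?_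
        intro a ha b hb
        rw [show (x :: m ++ [y]).getLast? = some y from List.getLast?_concat] at ha
        rw [show (x₂ :: m₂ ++ [y₂]).head? = some x₂ from rfl] at hb
        have ha' : y = a := by simpa using ha
        have hb' : x₂ = b := by simpa using hb
        subst ha' hb'; exact halt
      have hsh : (x :: m ++ [y]) ++ (x₂ :: m₂ ++ [y₂]) = x :: (m ++ y :: x₂ :: m₂) ++ [y₂] := by
        simp
      rw [hsh] at hW
      have hWp : (x :: (m ++ y :: x₂ :: m₂) ++ [y₂]).prod = g₁ * g₂ := by
        rw [← hsh, List.prod_append, hp1, hp2]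
      obtain ⟨-, hy2xK⟩ := bounded_struct hG.2 hW (by rw [hWp]; exact hb12)
      have i1 := mulK_iff hy2xK
      rcases hLx.1 with hA | hB
      · exact halt.1 ⟨hyx_iffs.1.2 hA, hyx2_iffs.1.1 (i1.1.2 hA)⟩
      · exact halt.2 ⟨hyx_iffs.2.2 hB, hyx2_iffs.2.1 (i1.2.2 hB)⟩
    have hyx2K' : y * x₂ ∈ A ⊓ B := by
      by_contra hc
      obtain ⟨hLyx2, j1, j2, j3, j4⟩ := same_factor_letter hLy hLx2 haltyx2 hc
      have hright : IsReducedWord A B ((y * x₂) :: m₂ ++ [y₂]) :=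
        red_congr_ends hw2 hLyx2 hLy2 j3.symm j4.symm Iff.rfl Iff.rfl
      have hW : IsReducedWord A B ((x :: m) ++ ((y * x₂) :: m₂ ++ [y₂])) := by
        refine red_append hxm hright ?_
        intro a ha b hb
        rw [show ((y * x₂) :: m₂ ++ [y₂]).head? = some (y * x₂) from rfl] at hb
        have hb' : y * x₂ = b := by simpa using hb
        subst hb'
        exact (alt_congr Iff.rfl Iff.rfl j1.symm j2.symm).1 (hjxm a ha)
      have hsh : (x :: m) ++ ((y * x₂) :: m₂ ++ [y₂]) = x :: (m ++ (y * x₂) :: m₂) ++ [y₂] := by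
        simp
      rw [hsh] at hW
      have hWp : (x :: (m ++ (y * x₂) :: m₂) ++ [y₂]).prod = g₁ * g₂ := by
        rw [← hsh, List.prod_append, List.prod_cons, prod_cons_append', ← hp1, ← hp2,
          prod_cons_append', prod_cons_append']
        group
      obtain ⟨-, hy2xK⟩ := bounded_struct hG.2 hW (by rw [hWp]; exact hb12)
      refine hc ?_
      have heq : y * x₂ = (y * x) * ((y₂ * x)⁻¹ * (y₂ * x₂)) := by group
      rw [heq]
      exact mul_mem hyxK (mul_mem (inv_mem hy2xK) hyx2K)
    have hhx2K : h0 * x₂ ∈ A ⊓ B := by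
      have heq : h0 * x₂ = (h0 * x) * ((y * x)⁻¹ * (y * x₂)) := by group
      rw [heq]; exact mul_mem hhxK (mul_mem (inv_mem hyxK) hyx2K')
    have hy2hK : y₂ * h0⁻¹ ∈ A ⊓ B := by
      have heq : y₂ * h0⁻¹ = (y₂ * x₂) * (h0 * x₂)⁻¹ := by group
      rw [heq]; exact mul_mem hyx2K (inv_mem hhx2K)
    have hc2 := conj_word hG.2 hw2 hm₂ hhx2K hy2hK
    rw [hp2] at hc2
    rw [hc2, hw2len]
    simp only [List.length_cons, List.length_append, List.length_nil]
    omega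
  · -- part (iii)
    intro hs
    rcases exists_hasRed hG g₂ with hK | ⟨w2, hw2, hp2⟩
    · exact conj_small hG.2 hLh (Or.inl hK)
    · cases w2 with
      | nil =>
        refine conj_small hG.2 hLh (Or.inl ?_)
        rw [← hp2, List.prod_nil]; exact one_mem _
      | cons a t =>
        cases t with
        | nil =>
          have ha : a = g₂ := by simpa using hp2
          subst ha
          have hLg2 : Letter A B a := hw2.1 a (by simp)
          have haltyg : ¬ Alt A B y a := by
            intro halt
            have hW : IsReducedWord A B ((x :: m ++ [y]) ++ [a]) := by
              refine red_append hw1 (red_singleton hLg2) ?_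
              intro p hp b hb
              rw [show (x :: m ++ [y]).getLast? = some y from List.getLast?_concat] at hp
              have hp' : y = p := by simpa using hp
              have hb' : a = b := by simpa using hb
              subst hp' hb'; exact halt
            have hsh : (x :: m ++ [y]) ++ [a] = x :: (m ++ [y]) ++ [a] := by simp
            rw [hsh] at hW
            have hWp : (x :: (m ++ [y]) ++ [a]).prod = g₁ * a := by
              rw [← hsh, List.prod_append, hp1]; simp
            obtain ⟨-, hgxK⟩ := bounded_struct hG.2 hW (by rw [hWp]; exact hb12)
            have i := mulK_iff hgxK
            rcases hLx.1 with hA | hB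
            · exact halt.1 ⟨hyx_iffs.1.2 hA, i.1.2 hA⟩
            · exact halt.2 ⟨hyx_iffs.2.2 hB, i.2.2 hB⟩
          have hsame := letters_same hLy hLg2 haltyg
          exact conj_small hG.2 hLh (Or.inr ⟨hLg2,
            hsame.1.symm.trans (hyx_iffs.1.trans hhx_iffs.1.symm),
            hsame.2.symm.trans (hyx_iffs.2.trans hhx_iffs.2.symm)⟩)
        | cons b t2 =>
          exfalso
          have hlen := amalgLen_eq hG.2 hw2 hp2
          rw [hlen] at hs
          simp only [List.length_cons] at hs
          omega
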